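/- For a finite mixture with K components and symmetric Dirichlet(gamma) weights, the prior probability that exactly k components are nonempty given N observations is P(K_+ = k | N, K, gamma) = N!/k! * K!/(K-k)! * Gamma(gamma K)/(Gamma(gamma K + N) Gamma(gamma)^k) * C^gamma_{N,k}, where C^gamma_{N,k} = sum over compositions (N_1,...,N_k) of N into k positive parts of prod_{j=1}^k Gamma(N_j + gamma)/Gamma(N_j + 1). -/

import Mathlib

open Finset

/-- `C^γ_{N,k}`: sum over compositions of `N` into `k` positive parts of
`∏_j Γ(N_j + γ)/Γ(N_j + 1)`. -/
noncomputable def compSum (γ : ℝ) (N k : ℕ) : ℝ :=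
  ∑ f ∈ (Finset.Nat.antidiagonalTuple k N).filter (fun f => ∀ j, 0 < f j),
    ∏ j, Real.Gamma ((f j : ℝ) + γ) / Real.Gamma ((f j : ℝ) + 1)

namespace PriorClusters

variable {N k : ℕ}

/-- fiber cardinality -/
def fib (S : Fin N → Fin k) (j : Fin k) : ℕ := (univ.filter fun i => S i = j).card

lemma fib_card_subtype (S : Fin N → Fin k) (j : Fin k) :
    Fintype.card {i // S i = j} = fib S j := Fintype.card_subtype _

lemma sum_fib (S : Fin N → Fin k) : ∑ j, fib S j = N := by
  have := Finset.card_eq_sum_card_fiberwise (f := S) (s := univ) (t := univ)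
    (fun i _ => mem_univ _)
  simpa [fib, Finset.card_univ] using this.symm

lemma fwd_cast {S T : Fin N → Fin k} (e : ∀ j, {i // S i = j} ≃ {i // T i = j})
    {j j' : Fin k} (h : j = j') (x : Fin N) (hx : S x = j) :
    ((e j) ⟨x, hx⟩).val = ((e j') ⟨x, h ▸ hx⟩).val := by subst h; rfl

lemma symm_cast {S T : Fin N → Fin k} (e : ∀ j, {i // S i = j} ≃ {i // T i = j})
    {j j' : Fin k} (h : j = j') (x : Fin N) (hx : T x = j) :
    ((e j).symm ⟨x, hx⟩).val = ((e j').symm ⟨x, h ▸ hx⟩).val := by subst h; rfl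

/-- glue a family of fiber bijections into a permutation -/
def glue (S T : Fin N → Fin k) (e : ∀ j, {i // S i = j} ≃ {i // T i = j}) :
    Equiv.Perm (Fin N) where
  toFun i := (e (S i) ⟨i, rfl⟩).val
  invFun i := ((e (T i)).symm ⟨i, rfl⟩).val
  left_inv i := by
    dsimp only
    generalize hy : e (S i) ⟨i, rfl⟩ = y
    obtain ⟨v, hv⟩ := y
    rw [symm_cast e hv v rfl,
      show (⟨v, hv ▸ rfl⟩ : {i' // T i' = S i}) = ⟨v, hv⟩ from rfl, ← hy,
      Equiv.symm_apply_apply]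
  right_inv i := by
    dsimp only
    generalize hy : (e (T i)).symm ⟨i, rfl⟩ = y
    obtain ⟨v, hv⟩ := y
    rw [fwd_cast e hv v rfl,
      show (⟨v, hv ▸ rfl⟩ : {i' // S i' = T i}) = ⟨v, hv⟩ from rfl, ← hy,
      Equiv.apply_symm_apply]

lemma comp_glue (S T : Fin N → Fin k) (e : ∀ j, {i // S i = j} ≃ {i // T i = j}) :
    T ∘ (glue S T e) = S := funext fun i => (e (S i) ⟨i, rfl⟩).2

/-- the set of permutations relating two functions is equivalent to families of
fiber bijections -/
def permFiberEquiv (S T : Fin N → Fin k) :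
    {σ : Equiv.Perm (Fin N) // T ∘ σ = S} ≃ ∀ j, {i // S i = j} ≃ {i // T i = j} where
  toFun σ j := σ.1.subtypeEquiv fun i => by rw [← congrFun σ.2 i]; exact Iff.rfl
  invFun e := ⟨glue S T e, comp_glue S T e⟩
  left_inv σ := Subtype.ext (Equiv.ext fun i => rfl)
  right_inv e := by
    funext j
    ext x
    obtain ⟨i, hi⟩ := x
    subst hi
    rfl

lemma fib_comp (T : Fin N → Fin k) (σ : Equiv.Perm (Fin N)) (j : Fin k) :
    fib (T ∘ σ) j = fib T j := by
  rw [← fib_card_subtype, ← fib_card_subtype]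
  exact Fintype.card_congr (σ.subtypeEquiv fun i => Iff.rfl)

lemma card_fib_eq_of_base (T : Fin N → Fin k) :
    (univ.filter fun S : Fin N → Fin k => ∀ j, fib S j = fib T j).card
      * ∏ j, (fib T j).factorial = N.factorial := by
  classical
  have hmaps : ∀ σ : Equiv.Perm (Fin N), σ ∈ (univ : Finset (Equiv.Perm (Fin N))) →
      T ∘ σ ∈ (univ.filter fun S : Fin N → Fin k => ∀ j, fib S j = fib T j) := by
    intro σ _
    simp only [mem_filter, mem_univ, true_and]
    exact fun j => fib_comp T σ j
  have hfib := Finset.card_eq_sum_card_fiberwise hmaps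
  have hterm : ∀ S ∈ (univ.filter fun S : Fin N → Fin k => ∀ j, fib S j = fib T j),
      ((univ : Finset (Equiv.Perm (Fin N))).filter fun σ : Equiv.Perm (Fin N) => T ∘ ⇑σ = S).card
        = ∏ j, (fib T j).factorial := by
    intro S hS
    simp only [mem_filter, mem_univ, true_and] at hS
    rw [← Fintype.card_subtype, Fintype.card_congr (permFiberEquiv S T), Fintype.card_pi]
    refine Finset.prod_congr rfl fun j _ => ?_
    have hc : Fintype.card {i // S i = j} = Fintype.card {i // T i = j} := by
      rw [fib_card_subtype, fib_card_subtype, hS j]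
    rw [Fintype.card_equiv (Fintype.equivOfCardEq hc), fib_card_subtype, hS j]
  have hsum : ∑ S ∈ (univ.filter fun S : Fin N → Fin k => ∀ j, fib S j = fib T j),
      ((univ : Finset (Equiv.Perm (Fin N))).filter fun σ : Equiv.Perm (Fin N) => T ∘ ⇑σ = S).card
      = (univ.filter fun S : Fin N → Fin k => ∀ j, fib S j = fib T j).card
        * ∏ j, (fib T j).factorial := by
    rw [Finset.sum_congr rfl hterm, Finset.sum_const, smul_eq_mul]
  have hN : Fintype.card (Equiv.Perm (Fin N)) = N.factorial := by
    simp [Fintype.card_perm]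
  rw [← hsum, ← hfib, Finset.card_univ, hN]

lemma exists_base (f : Fin k → ℕ) (hf : ∑ j, f j = N) :
    ∃ T : Fin N → Fin k, ∀ j, fib T j = f j := by
  classical
  have hcard : Fintype.card (Σ j, Fin (f j)) = Fintype.card (Fin N) := by
    simp [Fintype.card_sigma, hf]
  obtain ⟨e⟩ := Fintype.card_eq.mp hcard
  refine ⟨fun i => (e.symm i).1, fun j => ?_⟩
  rw [← fib_card_subtype]
  have e2 : {i // (e.symm i).1 = j} ≃ {p : Σ j, Fin (f j) // p.1 = j} :=
    e.symm.subtypeEquiv fun i => Iff.rfl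
  have e3 : {p : Σ j, Fin (f j) // p.1 = j} ≃ Fin (f j) :=
    { toFun := fun p => Fin.cast (congrArg f p.2) p.1.2
      invFun := fun x => ⟨⟨j, x⟩, rfl⟩
      left_inv := by rintro ⟨⟨j', x⟩, rfl⟩; rfl
      right_inv := fun x => rfl }
  rw [Fintype.card_congr (e2.trans e3), Fintype.card_fin]

lemma card_fib_eq (f : Fin k → ℕ) (hf : ∑ j, f j = N) :
    (univ.filter fun S : Fin N → Fin k => ∀ j, fib S j = f j).card
      * ∏ j, (f j).factorial = N.factorial := by
  obtain ⟨T, hT⟩ := exists_base f hf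
  have := card_fib_eq_of_base T
  simpa [hT] using this

variable {K : ℕ}

lemma surj_sum (γ : ℝ) :
    ∑ S' ∈ (univ : Finset (Fin N → Fin k)).filter Function.Surjective,
      ∏ j, Real.Gamma ((fib S' j : ℝ) + γ) / Real.Gamma γ
    = (N.factorial : ℝ) * ((Real.Gamma γ) ^ k)⁻¹ * compSum γ N k := by
  classical
  set t := (Finset.Nat.antidiagonalTuple k N).filter (fun f => ∀ j, 0 < f j) with ht
  have hmaps : ∀ S' ∈ (univ : Finset (Fin N → Fin k)).filter Function.Surjective,
      (fun j => fib S' j) ∈ t := by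
    intro S' hS'
    simp only [mem_filter, mem_univ, true_and] at hS'
    simp only [ht, mem_filter, Finset.Nat.mem_antidiagonalTuple]
    refine ⟨sum_fib S', fun j => ?_⟩
    obtain ⟨i, hi⟩ := hS' j
    exact Finset.card_pos.mpr ⟨i, by simp [hi]⟩
  rw [← Finset.sum_fiberwise_of_maps_to hmaps]
  have hinner : ∀ f ∈ t,
      (((univ : Finset (Fin N → Fin k)).filter Function.Surjective).filter
        (fun S' => (fun j => fib S' j) = f))
      = (univ.filter fun S' : Fin N → Fin k => ∀ j, fib S' j = f j) := by
    intro f hf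
    simp only [ht, mem_filter, Finset.Nat.mem_antidiagonalTuple] at hf
    ext S'
    simp only [mem_filter, mem_univ, true_and, funext_iff]
    constructor
    · rintro ⟨-, h⟩; exact h
    · intro h
      refine ⟨fun j => ?_, h⟩
      have : 0 < fib S' j := (h j).symm ▸ hf.2 j
      obtain ⟨i, hi⟩ := Finset.card_pos.mp this
      exact ⟨i, (mem_filter.mp hi).2⟩
  have step : ∀ f ∈ t,
      (∑ S' ∈ (((univ : Finset (Fin N → Fin k)).filter Function.Surjective).filter
          (fun S' => (fun j => fib S' j) = f)),
        ∏ j, Real.Gamma ((fib S' j : ℝ) + γ) / Real.Gamma γ)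
      = ((univ.filter fun S' : Fin N → Fin k => ∀ j, fib S' j = f j).card : ℝ)
          * ∏ j, Real.Gamma ((f j : ℝ) + γ) / Real.Gamma γ := by
    intro f hf
    refine (Finset.sum_congr (hinner f hf) (fun S' hS' => ?_)).trans
      (by rw [Finset.sum_const, nsmul_eq_mul])
    simp only [mem_filter, mem_univ, true_and] at hS'
    exact Finset.prod_congr rfl fun j _ => by rw [hS' j]
  rw [Finset.sum_congr rfl step]
  -- now : ∑ f ∈ t, card * ∏ Γ(f j+γ)/Γγ = N! * (Γγ^k)⁻¹ * compSum
  rw [compSum, ← ht, Finset.mul_sum]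
  refine Finset.sum_congr rfl fun f hf => ?_
  simp only [ht, mem_filter, Finset.Nat.mem_antidiagonalTuple] at hf
  have hcard := card_fib_eq f hf.1
  have hP : (0 : ℝ) < ∏ j, ((f j).factorial : ℝ) := by
    positivity
  have hcardR : ((univ.filter fun S' : Fin N → Fin k => ∀ j, fib S' j = f j).card : ℝ)
      = (N.factorial : ℝ) / ∏ j, ((f j).factorial : ℝ) := by
    rw [eq_div_iff hP.ne']
    exact_mod_cast congrArg (Nat.cast : ℕ → ℝ) hcard
  rw [hcardR]
  have hG : ∀ j : Fin k, Real.Gamma ((f j : ℝ) + 1) = ((f j).factorial : ℝ) :=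
    fun j => Real.Gamma_nat_eq_factorial (f j)
  rw [Finset.prod_div_distrib, Finset.prod_const, Finset.card_univ, Fintype.card_fin,
    Finset.prod_div_distrib]
  rw [Finset.prod_congr rfl fun j _ => hG j]
  field_simp
lemma supp_sum (γ : ℝ) (hΓ : Real.Gamma γ ≠ 0) (hk : 1 ≤ k) (T : Finset (Fin K))
    (hT : T.card = k) :
    ∑ S ∈ (univ : Finset (Fin N → Fin K)).filter
        (fun S => (univ.filter fun l => ∃ i, S i = l) = T),
      ∏ l, Real.Gamma ((fib S l : ℝ) + γ) / Real.Gamma γ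
    = ∑ S' ∈ (univ : Finset (Fin N → Fin k)).filter Function.Surjective,
      ∏ j, Real.Gamma ((fib S' j : ℝ) + γ) / Real.Gamma γ := by
  classical
  set ι := T.orderEmbOfFin hT with hι
  have hcoe : ∀ j : Fin k, ((T.orderIsoOfFin hT j : Fin K)) = ι j :=
    fun j => T.coe_orderIsoOfFin_apply hT j
  -- the two maps
  set toS' : (Fin N → Fin K) → (Fin N → Fin k) := fun S i0 =>
    if h : S i0 ∈ T then (T.orderIsoOfFin hT).symm ⟨S i0, h⟩ else ⟨0, hk⟩ with htoS'
  set toS : (Fin N → Fin k) → (Fin N → Fin K) := fun S' => ι ∘ S' with htoS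
  -- value lemma
  have hval : ∀ S' : Fin N → Fin k,
      ∏ l, Real.Gamma ((fib (toS S') l : ℝ) + γ) / Real.Gamma γ
      = ∏ j, Real.Gamma ((fib S' j : ℝ) + γ) / Real.Gamma γ := by
    intro S'
    have hone : ∀ l ∈ (univ : Finset (Fin K)), l ∉ T →
        Real.Gamma ((fib (toS S') l : ℝ) + γ) / Real.Gamma γ = 1 := by
      intro l _ hl
      have : fib (toS S') l = 0 := by
        rw [fib, Finset.card_eq_zero, Finset.filter_eq_empty_iff]
        intro i _
        exact fun h => hl (h ▸ T.orderEmbOfFin_mem hT (S' i))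
      rw [this, Nat.cast_zero, zero_add, div_self hΓ]
    rw [← Finset.prod_subset (Finset.subset_univ T) hone]
    have hmap : (univ : Finset (Fin k)).map ι.toEmbedding = T := by
      apply Finset.eq_of_subset_of_card_le
      · intro l hl
        obtain ⟨j, -, rfl⟩ := Finset.mem_map.mp hl
        exact T.orderEmbOfFin_mem hT j
      · rw [Finset.card_map, Finset.card_univ, Fintype.card_fin, hT]
    rw [← hmap, Finset.prod_map]
    simp only [RelEmbedding.coe_toEmbedding]
    refine Finset.prod_congr rfl fun j _ => ?_
    have : fib (toS S') (ι j) = fib S' j := by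
      rw [fib, fib]
      congr 1
      apply Finset.filter_congr
      intro i _
      simp only [htoS, Function.comp_apply]
      exact ⟨fun h => ι.injective h, fun h => h ▸ rfl⟩
    rw [this]
  -- membership facts
  have hmemT : ∀ S ∈ (univ : Finset (Fin N → Fin K)).filter
      (fun S => (univ.filter fun l => ∃ i, S i = l) = T), ∀ i0, S i0 ∈ T := by
    intro S hS i0
    simp only [mem_filter, mem_univ, true_and] at hS
    rw [← hS]
    simp only [mem_filter, mem_univ, true_and]
    exact ⟨i0, rfl⟩
  have hsymm : ∀ (x : Fin K) (h : x ∈ T) (j : Fin k), x = ι j →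
      (T.orderIsoOfFin hT).symm ⟨x, h⟩ = j := by
    intro x h j hx
    have : (⟨x, h⟩ : T) = T.orderIsoOfFin hT j := by
      apply Subtype.ext
      rw [hcoe j]; exact hx
    rw [this, OrderIso.symm_apply_apply]
  refine Finset.sum_nbij' toS' toS ?_ ?_ ?_ ?_ ?_
  · -- maps to surjective
    intro S hS
    simp only [mem_filter, mem_univ, true_and]
    intro j
    have hmem : ι j ∈ (univ.filter fun l => ∃ i, S i = l) := by
      rw [(mem_filter.mp hS).2]; exact T.orderEmbOfFin_mem hT j
    obtain ⟨i0, hi0⟩ := (mem_filter.mp hmem).2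
    refine ⟨i0, ?_⟩
    simp only [htoS', dif_pos (hmemT S hS i0)]
    exact hsymm (S i0) (hmemT S hS i0) j hi0
  · -- maps back
    intro S' hS'
    simp only [mem_filter, mem_univ, true_and] at hS' ⊢
    ext l
    simp only [mem_filter, mem_univ, true_and, htoS, Function.comp_apply]
    constructor
    · rintro ⟨i, rfl⟩; exact T.orderEmbOfFin_mem hT (S' i)
    · intro hl
      have : l ∈ Set.range ι := by rw [T.range_orderEmbOfFin hT]; exact hl
      obtain ⟨j, rfl⟩ := this
      obtain ⟨i, rfl⟩ := hS' j
      exact ⟨i, rfl⟩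
  · -- left inverse
    intro S hS
    funext i0
    simp only [htoS, htoS', Function.comp_apply, dif_pos (hmemT S hS i0)]
    rw [hι, ← hcoe, OrderIso.apply_symm_apply]
  · -- right inverse
    intro S' hS'
    funext i0
    simp only [htoS, htoS', Function.comp_apply,
      dif_pos (T.orderEmbOfFin_mem hT (S' i0))]
    rw [dif_pos (show ι (S' i0) ∈ T from T.orderEmbOfFin_mem hT (S' i0))]
    exact hsymm (ι (S' i0)) (T.orderEmbOfFin_mem hT (S' i0)) (S' i0) rfl
  · -- values
    intro S hS
    conv_lhs => rw [show S = toS (toS' S) by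
      funext i0
      simp only [htoS, htoS', Function.comp_apply, dif_pos (hmemT S hS i0)]
      rw [hι, ← hcoe, OrderIso.apply_symm_apply]]
    exact hval (toS' S)

end PriorClusters

open PriorClusters in
/-- For a finite mixture with `K` components and symmetric Dirichlet(γ)
weights, summing the marginal allocation probability over all allocation vectors with
exactly `k` nonempty components yields
`N!/k! · K!/(K-k)! · Γ(γK)/(Γ(γK+N) Γ(γ)^k) · C^γ_{N,k}`. -/
theorem prior_number_of_clusters (N K k : ℕ) (γ : ℝ) (hγ : 0 < γ)
    (hk : 1 ≤ k) (hkK : k ≤ K) (hkN : k ≤ N) :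
    (∑ S ∈ (Finset.univ : Finset (Fin N → Fin K)).filter
        (fun S => (Finset.univ.filter (fun l : Fin K => ∃ i, S i = l)).card = k),
      Real.Gamma (γ * K) / Real.Gamma (γ * K + N) *
        ∏ l : Fin K,
          Real.Gamma (((Finset.univ.filter (fun i => S i = l)).card : ℝ) + γ) / Real.Gamma γ)
    = (Nat.factorial N : ℝ) / (Nat.factorial k : ℝ) *
        ((Nat.factorial K : ℝ) / (Nat.factorial (K - k) : ℝ)) *
        (Real.Gamma (γ * K) / (Real.Gamma (γ * K + N) * (Real.Gamma γ) ^ k)) *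
        compSum γ N k := by
  classical
  have hK1 : 1 ≤ K := hk.trans hkK
  have hΓγ : Real.Gamma γ ≠ 0 := (Real.Gamma_pos_of_pos hγ).ne'
  have hKpos : (0:ℝ) < K := by exact_mod_cast hK1
  have hΓden : Real.Gamma (γ * K + N) ≠ 0 := by
    refine (Real.Gamma_pos_of_pos ?_).ne'
    have h1 : (0:ℝ) ≤ N := Nat.cast_nonneg N
    nlinarith [mul_pos hγ hKpos]
  rw [← Finset.mul_sum]
  have key : ∀ (S : Fin N → Fin K) (l : Fin K),
      (univ.filter fun i => S i = l).card = fib S l := fun _ _ => rfl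
  have core : (∑ S ∈ (Finset.univ : Finset (Fin N → Fin K)).filter
        (fun S => (Finset.univ.filter (fun l : Fin K => ∃ i, S i = l)).card = k),
      ∏ l : Fin K,
        Real.Gamma (((Finset.univ.filter (fun i => S i = l)).card : ℝ) + γ) / Real.Gamma γ)
      = (K.choose k : ℝ) *
          ((N.factorial : ℝ) * ((Real.Gamma γ)^k)⁻¹ * compSum γ N k) := by
    simp only [key]
    have hmaps : ∀ S ∈ (Finset.univ : Finset (Fin N → Fin K)).filter
        (fun S => (Finset.univ.filter (fun l : Fin K => ∃ i, S i = l)).card = k),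
        (univ.filter fun l => ∃ i, S i = l) ∈ Finset.powersetCard k (univ : Finset (Fin K)) := by
      intro S hS
      rw [Finset.mem_powersetCard]
      exact ⟨subset_univ _, (mem_filter.mp hS).2⟩
    rw [← Finset.sum_fiberwise_of_maps_to hmaps]
    have hinner : ∀ T ∈ Finset.powersetCard k (univ : Finset (Fin K)),
        (∑ S ∈ ((Finset.univ : Finset (Fin N → Fin K)).filter
            (fun S => (Finset.univ.filter (fun l : Fin K => ∃ i, S i = l)).card = k)).filter
            (fun S => (univ.filter fun l => ∃ i, S i = l) = T),
          ∏ l, Real.Gamma ((fib S l : ℝ) + γ) / Real.Gamma γ)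
        = (N.factorial : ℝ) * ((Real.Gamma γ)^k)⁻¹ * compSum γ N k := by
      intro T hT
      have hTcard : T.card = k := (Finset.mem_powersetCard.mp hT).2
      have hss : ((Finset.univ : Finset (Fin N → Fin K)).filter
            (fun S => (Finset.univ.filter (fun l : Fin K => ∃ i, S i = l)).card = k)).filter
            (fun S => (univ.filter fun l => ∃ i, S i = l) = T)
          = (univ : Finset (Fin N → Fin K)).filter
            (fun S => (univ.filter fun l => ∃ i, S i = l) = T) := by
        rw [Finset.filter_filter]
        ext S
        simp only [mem_filter, mem_univ, true_and]
        constructor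
        · rintro ⟨-, h⟩; exact h
        · intro h; exact ⟨by rw [h, hTcard], h⟩
      rw [hss, supp_sum γ hΓγ hk T hTcard, surj_sum γ]
    rw [Finset.sum_congr rfl hinner, Finset.sum_const, Finset.card_powersetCard,
      Finset.card_univ, Fintype.card_fin, nsmul_eq_mul]
  rw [core]
  have hchoose : (K.choose k : ℝ) * (k.factorial : ℝ) * ((K-k).factorial : ℝ)
      = (K.factorial : ℝ) := by
    exact_mod_cast Nat.choose_mul_factorial_mul_factorial hkK
  rw [← hchoose]
  have hkf : (k.factorial : ℝ) ≠ 0 := Nat.cast_ne_zero.mpr k.factorial_ne_zero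
  have hKkf : ((K-k).factorial : ℝ) ≠ 0 := Nat.cast_ne_zero.mpr (K-k).factorial_ne_zero
  field_simp
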